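/- arXiv:1312.1530 — 3 statements merged into one kernel-verified Lean document; each statement's English description precedes it below -/
import Mathlib

section
/- Let A, B, C be positive reals. The symmetric 3×3 matrix M with diagonal entries M₁₁ = 4ABC/((A+B)(A+C)(A+B+C)), M₂₂ = 4ABC/((A+B)(B+C)(A+B+C)), M₃₃ = 4ABC/((A+C)(B+C)(A+B+C)), and off-diagonal entries M₁₂ = M₂₁ = −4ABC²/((A+B)(A+C)(B+C)(A+B+C)), M₁₃ = M₃₁ = −4AB²C/((A+B)(A+C)(B+C)(A+B+C)), M₂₃ = M₃₂ = −4A²BC/((A+B)(A+C)(B+C)(A+B+C)), is positive semidefinite. -/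
set_option maxHeartbeats 2000000 in
/-- the 3×3 matrix H is positive semidefinite. -/
theorem stmt_5 (A B C : ℝ) (hA : 0 < A) (hB : 0 < B) (hC : 0 < C) :
    (Matrix.of
      !![4 * A * B * C / ((A + B) * (A + C) * (A + B + C)),
         -(4 * A * B * C ^ 2) / ((A + B) * (A + C) * (B + C) * (A + B + C)),
         -(4 * A * B ^ 2 * C) / ((A + B) * (A + C) * (B + C) * (A + B + C));
         -(4 * A * B * C ^ 2) / ((A + B) * (A + C) * (B + C) * (A + B + C)),
         4 * A * B * C / ((A + B) * (B + C) * (A + B + C)),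
         -(4 * A ^ 2 * B * C) / ((A + B) * (A + C) * (B + C) * (A + B + C));
         -(4 * A * B ^ 2 * C) / ((A + B) * (A + C) * (B + C) * (A + B + C)),
         -(4 * A ^ 2 * B * C) / ((A + B) * (A + C) * (B + C) * (A + B + C)),
         4 * A * B * C / ((A + C) * (B + C) * (A + B + C))]).PosSemidef := by
  have hAB : 0 < A + B := by linarith
  have hAC : 0 < A + C := by linarith
  have hBC : 0 < B + C := by linarith
  have hABC : 0 < A + B + C := by linarith
  rw [Matrix.posSemidef_iff_dotProduct_mulVec]
  constructor
  · rw [Matrix.IsHermitian]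
    ext i j
    fin_cases i <;> fin_cases j <;>
      simp [Matrix.conjTranspose_apply] <;> rfl
  · intro x
    have hx := x
    simp only [dotProduct, Matrix.mulVec, Fin.sum_univ_three, Matrix.of_apply,
      Matrix.cons_val', Matrix.cons_val_zero, Matrix.cons_val_one, Matrix.head_cons,
      Matrix.empty_val', Matrix.cons_val_fin_one, Matrix.head_fin_const, Matrix.cons_val_two, Matrix.tail_cons,
      Pi.star_apply, star_trivial, RCLike.ofReal_real_eq_id, id]
    set a := x 0
    set b := x 1
    set c := x 2
    have key : a * (4 * A * B * C / ((A + B) * (A + C) * (A + B + C)) * a +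
        -(4 * A * B * C ^ 2) / ((A + B) * (A + C) * (B + C) * (A + B + C)) * b +
        -(4 * A * B ^ 2 * C) / ((A + B) * (A + C) * (B + C) * (A + B + C)) * c) +
        b * (-(4 * A * B * C ^ 2) / ((A + B) * (A + C) * (B + C) * (A + B + C)) * a +
        4 * A * B * C / ((A + B) * (B + C) * (A + B + C)) * b +
        -(4 * A ^ 2 * B * C) / ((A + B) * (A + C) * (B + C) * (A + B + C)) * c) +
        c * (-(4 * A * B ^ 2 * C) / ((A + B) * (A + C) * (B + C) * (A + B + C)) * a +
        -(4 * A ^ 2 * B * C) / ((A + B) * (A + C) * (B + C) * (A + B + C)) * b +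
        4 * A * B * C / ((A + C) * (B + C) * (A + B + C)) * c) =
        4 * A * B * C / ((A + B) * (A + C) * (B + C) * (A + B + C)) *
          (C * (a - b) ^ 2 + B * (a - c) ^ 2 + A * (b - c) ^ 2) := by
      have e1 : 4 * A * B * C / ((A + B) * (A + C) * (A + B + C)) =
          4 * A * B * C * (B + C) / ((A + B) * (A + C) * (B + C) * (A + B + C)) := by
        rw [div_eq_div_iff (by positivity) (by positivity)]; ring
      have e2 : 4 * A * B * C / ((A + B) * (B + C) * (A + B + C)) =
          4 * A * B * C * (A + C) / ((A + B) * (A + C) * (B + C) * (A + B + C)) := by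
        rw [div_eq_div_iff (by positivity) (by positivity)]; ring
      have e3 : 4 * A * B * C / ((A + C) * (B + C) * (A + B + C)) =
          4 * A * B * C * (A + B) / ((A + B) * (A + C) * (B + C) * (A + B + C)) := by
        rw [div_eq_div_iff (by positivity) (by positivity)]; ring
      rw [e1, e2, e3]
      ring
    refine le_of_le_of_eq ?_ key.symm
    positivity
end

section
/- In the Plackett-Luce model with weights w ∈ ℝⁿ (n ≥ 2), the probability that item u is ranked before item v equals e^{w(u)}/(e^{w(u)} + e^{w(v)}), for any distinct u, v. -/
open Finset

section PLaux

set_option linter.unusedSectionVars false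

variable {α : Type*} [DecidableEq α]

noncomputable def PLlist (w : α → ℝ) : List α → ℝ
  | [] => 1
  | a :: t => Real.exp (w a) / (∑ j ∈ (a :: t).toFinset, Real.exp (w j)) * PLlist w t

noncomputable def perms (s : Finset α) : Finset (List α) := s.toList.permutations.toFinset

lemma mem_perms {s : Finset α} {l : List α} : l ∈ perms s ↔ l.Nodup ∧ l.toFinset = s := by
  rw [perms, List.mem_toFinset, List.mem_permutations]
  constructor
  · intro h
    refine ⟨h.nodup_iff.mpr s.nodup_toList, ?_⟩
    ext a; simp [h.mem_iff]
  · rintro ⟨h1, h2⟩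
    refine List.perm_of_nodup_nodup_toFinset_eq h1 s.nodup_toList ?_
    rw [h2]; simp

lemma perms_empty : perms (∅ : Finset α) = {[]} := by
  ext l; simp [mem_perms, List.toFinset_eq_empty_iff]
  rintro rfl; simp

lemma perms_eq_biUnion (s : Finset α) (hs : s.Nonempty) :
    perms s = s.biUnion (fun a => (perms (s.erase a)).image (a :: ·)) := by
  ext l
  simp only [mem_biUnion, mem_image, mem_perms]
  constructor
  · rintro ⟨h1, rfl⟩
    obtain ⟨a, t, rfl⟩ : ∃ a t, l = a :: t := by
      cases l with
      | nil => exact absurd hs (by simp)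
      | cons a t => exact ⟨a, t, rfl⟩
    simp only [List.nodup_cons] at h1
    refine ⟨a, by simp, t, ⟨h1.2, ?_⟩, rfl⟩
    rw [List.toFinset_cons, Finset.erase_insert (by simpa using h1.1)]
  · rintro ⟨a, ha, t, ⟨ht1, ht2⟩, rfl⟩
    have hat : a ∉ t := by
      intro h; have := List.mem_toFinset.mpr h; rw [ht2] at this; simp at this
    refine ⟨List.nodup_cons.mpr ⟨hat, ht1⟩, ?_⟩
    rw [List.toFinset_cons, ht2, Finset.insert_erase ha]

lemma sum_perms (s : Finset α) (hs : s.Nonempty) (F : List α → ℝ) :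
    ∑ l ∈ perms s, F l = ∑ a ∈ s, ∑ t ∈ perms (s.erase a), F (a :: t) := by
  rw [perms_eq_biUnion s hs, Finset.sum_biUnion]
  · refine Finset.sum_congr rfl fun a _ => ?_
    rw [Finset.sum_image]
    intro x _ y _ h; simpa using h
  · intro a _ b _ hab
    simp only [Finset.disjoint_left, mem_image]
    rintro l ⟨t, _, rfl⟩ ⟨t', _, h⟩
    exact hab (by simpa using (List.cons.injEq .. ▸ congrArg id h).1.symm ▸ rfl)

lemma sum_exp_pos (w : α → ℝ) {s : Finset α} (hs : s.Nonempty) :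
    0 < ∑ j ∈ s, Real.exp (w j) :=
  Finset.sum_pos (fun j _ => Real.exp_pos _) hs

lemma PLlist_cons (w : α → ℝ) (a : α) (t : List α) :
    PLlist w (a :: t) =
      Real.exp (w a) / (∑ j ∈ (a :: t).toFinset, Real.exp (w j)) * PLlist w t := rfl

lemma toFinset_cons_of_mem {s : Finset α} {a : α} (ha : a ∈ s) {t : List α}
    (ht : t ∈ perms (s.erase a)) : (a :: t).toFinset = s := by
  rw [List.toFinset_cons, (mem_perms.mp ht).2, Finset.insert_erase ha]

lemma sum_PL_one (w : α → ℝ) (s : Finset α) : ∑ l ∈ perms s, PLlist w l = 1 := by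
  induction s using Finset.strongInduction with
  | _ s ih =>
    rcases s.eq_empty_or_nonempty with rfl | hs
    · rw [perms_empty]; simp [PLlist]
    · rw [sum_perms s hs]
      have : ∀ a ∈ s, ∑ t ∈ perms (s.erase a), PLlist w (a :: t)
          = Real.exp (w a) / (∑ j ∈ s, Real.exp (w j)) := by
        intro a ha
        rw [Finset.sum_congr rfl (fun t ht => by
          rw [PLlist_cons, toFinset_cons_of_mem ha ht]), ← Finset.mul_sum,
          ih _ (Finset.erase_ssubset ha), mul_one]
      rw [Finset.sum_congr rfl this, ← Finset.sum_div,
        div_self (ne_of_gt (sum_exp_pos w hs))]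

lemma sum_PL_before (w : α → ℝ) (s : Finset α) {u v : α} (hu : u ∈ s) (hv : v ∈ s)
    (huv : u ≠ v) :
    ∑ l ∈ perms s, (if l.idxOf u < l.idxOf v then PLlist w l else 0)
      = Real.exp (w u) / (Real.exp (w u) + Real.exp (w v)) := by
  induction s using Finset.strongInduction with
  | _ s ih =>
    have hs : s.Nonempty := ⟨u, hu⟩
    set S := ∑ j ∈ s, Real.exp (w j) with hS
    have hSpos : 0 < S := sum_exp_pos w hs
    set R := Real.exp (w u) / (Real.exp (w u) + Real.exp (w v)) with hR
    have hepos : 0 < Real.exp (w u) + Real.exp (w v) :=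
      add_pos (Real.exp_pos _) (Real.exp_pos _)
    rw [sum_perms s hs]
    have key : ∀ a ∈ s, ∑ t ∈ perms (s.erase a),
        (if (a :: t).idxOf u < (a :: t).idxOf v then PLlist w (a :: t) else 0)
        = if a = u then Real.exp (w u) / S
          else if a = v then 0
          else Real.exp (w a) / S * R := by
      intro a ha
      rcases eq_or_ne a u with rfl | hau
      · simp only [if_pos rfl]
        have : ∀ t ∈ perms (s.erase a),
            (if (a :: t).idxOf a < (a :: t).idxOf v then PLlist w (a :: t) else 0)
              = Real.exp (w a) / S * PLlist w t := by
          intro t ht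
          rw [if_pos, PLlist_cons, toFinset_cons_of_mem ha ht]
          rw [List.idxOf_cons_self, List.idxOf_cons_ne _ huv]
          exact Nat.succ_pos _
        rw [Finset.sum_congr rfl this, ← Finset.mul_sum,
          sum_PL_one w (s.erase a), mul_one]
        simp
      · rcases eq_or_ne a v with rfl | hav
        · rw [if_neg hau, if_pos rfl]
          apply Finset.sum_eq_zero
          intro t ht
          rw [if_neg]
          rw [List.idxOf_cons_self]
          omega
        · rw [if_neg hau, if_neg hav]
          have : ∀ t ∈ perms (s.erase a),
              (if (a :: t).idxOf u < (a :: t).idxOf v then PLlist w (a :: t) else 0)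
                = Real.exp (w a) / S *
                  (if t.idxOf u < t.idxOf v then PLlist w t else 0) := by
            intro t ht
            simp only [List.idxOf_cons_ne _ hau, List.idxOf_cons_ne _ hav,
              Nat.succ_lt_succ_iff]
            split
            · rw [PLlist_cons, toFinset_cons_of_mem ha ht]
            · rw [mul_zero]
          rw [Finset.sum_congr rfl this, ← Finset.mul_sum,
            ih _ (Finset.erase_ssubset ha) (Finset.mem_erase.mpr ⟨hau.symm, hu⟩)
              (Finset.mem_erase.mpr ⟨hav.symm, hv⟩)]
    rw [Finset.sum_congr rfl key]
    -- now a pure sum computation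
    rw [← Finset.add_sum_erase s _ hu]
    rw [if_pos rfl]
    rw [← Finset.add_sum_erase (s.erase u) _ (Finset.mem_erase.mpr ⟨huv.symm, hv⟩)]
    rw [if_neg (huv.symm), if_pos rfl]
    have hrest : ∀ a ∈ (s.erase u).erase v,
        (if a = u then Real.exp (w u) / S else if a = v then 0 else Real.exp (w a) / S * R)
          = Real.exp (w a) / S * R := by
      intro a ha
      simp only [Finset.mem_erase] at ha
      rw [if_neg ha.2.1, if_neg ha.1]
    rw [Finset.sum_congr rfl hrest]
    have hsum : ∑ a ∈ (s.erase u).erase v, Real.exp (w a)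
        = S - Real.exp (w u) - Real.exp (w v) := by
      have h1 : ∑ a ∈ s.erase u, Real.exp (w a) = S - Real.exp (w u) := by
        rw [hS, ← Finset.add_sum_erase s _ hu]; ring
      rw [← Finset.add_sum_erase (s.erase u) _ (Finset.mem_erase.mpr ⟨huv.symm, hv⟩)] at h1
      linarith
    have : ∑ a ∈ (s.erase u).erase v, Real.exp (w a) / S * R
        = (S - Real.exp (w u) - Real.exp (w v)) / S * R := by
      rw [← hsum, Finset.sum_div, Finset.sum_mul]
    rw [this, hR]
    field_simp
    ring

lemma PLlist_eq_prod (w : α → ℝ) : ∀ l : List α,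
    PLlist w l = ∏ k : Fin l.length,
      Real.exp (w (l.get k)) / ∑ j ∈ (l.drop (k : ℕ)).toFinset, Real.exp (w j)
  | [] => by simp [PLlist]
  | a :: t => by
    rw [show PLlist w (a :: t) = Real.exp (w a) /
        (∑ j ∈ (a :: t).toFinset, Real.exp (w j)) * PLlist w t from rfl,
      PLlist_eq_prod w t]
    erw [Fin.prod_univ_succ]
    simp [List.get_cons_succ]

lemma PLlist_eq_prod' (w : α → ℝ) {n : ℕ} (l : List α) (hl : l.length = n) :
    PLlist w l = ∏ k : Fin n,
      Real.exp (w (l.get (Fin.cast hl.symm k)))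
        / ∑ j ∈ (l.drop (k : ℕ)).toFinset, Real.exp (w j) := by
  subst hl
  simpa using PLlist_eq_prod w l

end PLaux

/-- Probability that the Plackett-Luce model with weights `w` produces the ranking `π`
(`π v` is the position of item `v`, smaller means earlier): items are chosen
sequentially, each time with probability proportional to `exp (w item)` among the
remaining items. -/
noncomputable def PLprob {n : ℕ} (w : Fin n → ℝ) (π : Equiv.Perm (Fin n)) : ℝ :=
  ∏ k : Fin n,
    Real.exp (w (π.symm k)) / ∑ j ∈ univ.filter (fun j => k ≤ π j), Real.exp (w j)


lemma toFinset_drop_ofFn {n : ℕ} (π : Equiv.Perm (Fin n)) (k : Fin n) :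
    ((List.ofFn (fun i => π.symm i)).drop (k : ℕ)).toFinset
      = univ.filter (fun j => k ≤ π j) := by
  ext j
  simp only [List.mem_toFinset, Finset.mem_filter, Finset.mem_univ, true_and]
  constructor
  · intro hj
    obtain ⟨i, hi, hji⟩ := List.mem_iff_getElem.mp hj
    rw [List.getElem_drop] at hji
    have hlt : (k : ℕ) + i < n := by
      have := hi
      simp only [List.length_drop, List.length_ofFn] at this
      omega
    rw [List.getElem_ofFn] at hji
    have : π j = ⟨(k : ℕ) + i, by simpa using hlt⟩ := by
      rw [← hji]; simp
    rw [Fin.le_def, this]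
    simp
  · intro hk
    apply List.mem_iff_getElem.mpr
    refine ⟨(π j : ℕ) - (k : ℕ), ?_, ?_⟩
    · simp only [List.length_drop, List.length_ofFn]
      have := (π j).isLt
      omega
    · rw [List.getElem_drop, List.getElem_ofFn]
      have hval : (k : ℕ) + ((π j : ℕ) - (k : ℕ)) = (π j : ℕ) := by
        rw [Fin.le_def] at hk; omega
      have : (⟨(k : ℕ) + ((π j : ℕ) - (k : ℕ)), by simp [hval]⟩ : Fin n) = π j := by
        ext; simp [hval]
      rw [this, Equiv.symm_apply_apply]

lemma PLprob_eq {n : ℕ} (w : Fin n → ℝ) (π : Equiv.Perm (Fin n)) :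
    PLlist w (List.ofFn (fun k => π.symm k)) = PLprob w π := by
  rw [PLlist_eq_prod' w _ List.length_ofFn]
  refine Finset.prod_congr rfl fun k _ => ?_
  rw [toFinset_drop_ofFn]
  congr 2
  rw [List.get_ofFn]
  rfl

lemma indexOf_ofFn {n : ℕ} (π : Equiv.Perm (Fin n)) (u : Fin n) :
    (List.ofFn (fun k => π.symm k)).idxOf u = (π u : ℕ) := by
  have hmem : u ∈ List.ofFn (fun k => π.symm k) :=
    List.mem_ofFn.mpr ⟨π u, by simp⟩
  have hlt : (List.ofFn (fun k => π.symm k)).idxOf u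
      < (List.ofFn (fun k => π.symm k)).length := List.idxOf_lt_length_iff.mpr hmem
  have h1 : (List.ofFn (fun k => π.symm k))[(List.ofFn (fun k => π.symm k)).idxOf u] = u :=
    List.getElem_idxOf hlt
  have hlen : (List.ofFn (fun k => π.symm k)).length = n := List.length_ofFn
  rw [List.getElem_ofFn] at h1
  have h2 : π.symm ⟨(List.ofFn (fun k => π.symm k)).idxOf u, by omega⟩ = u := h1
  have h3 : π u = ⟨(List.ofFn (fun k => π.symm k)).idxOf u, by omega⟩ :=
    π.symm.injective (by rw [Equiv.symm_apply_apply, h2])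
  exact (congrArg Fin.val h3).symm

/-- under Plackett-Luce, P(u ranked before v) = e^{w u}/(e^{w u}+e^{w v}). -/
theorem stmt_8 (n : ℕ) (w : Fin n → ℝ) (u v : Fin n) (huv : u ≠ v) :
    ∑ π ∈ univ.filter (fun π : Equiv.Perm (Fin n) => π u < π v), PLprob w π
      = Real.exp (w u) / (Real.exp (w u) + Real.exp (w v)) := by
  rw [Finset.sum_filter]
  rw [← sum_PL_before w univ (Finset.mem_univ u) (Finset.mem_univ v) huv]
  refine Finset.sum_bij (fun π _ => List.ofFn (fun k => π.symm k)) ?_ ?_ ?_ ?_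
  · intro π _
    rw [mem_perms]
    constructor
    · exact List.nodup_ofFn.mpr π.symm.injective
    · ext a
      simp only [List.mem_toFinset, Finset.mem_univ, iff_true, List.mem_ofFn]
      exact ⟨π a, by simp⟩
  · intro π₁ _ π₂ _ h
    have := List.ofFn_injective h
    have h2 : π₁.symm = π₂.symm := Equiv.coe_fn_injective this
    calc π₁ = π₁.symm.symm := rfl
    _ = π₂.symm.symm := by rw [h2]
    _ = π₂ := rfl
  · intro l hl
    obtain ⟨hnd, hfin⟩ := mem_perms.mp hl
    have hlen : l.length = n := by
      rw [← List.toFinset_card_of_nodup hnd, hfin, Finset.card_univ, Fintype.card_fin]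
    have hinj : Function.Injective (fun k : Fin n => l.get (Fin.cast hlen.symm k)) := by
      intro a b hab
      have := hnd.get_inj_iff.mp hab
      simpa [Fin.ext_iff] using this
    have hbij : Function.Bijective (fun k : Fin n => l.get (Fin.cast hlen.symm k)) :=
      (Finite.injective_iff_bijective).mp hinj
    refine ⟨(Equiv.ofBijective _ hbij).symm, Finset.mem_univ _, ?_⟩
    apply List.ext_getElem
    · simp [hlen]
    · intro i h1 h2
      rw [List.getElem_ofFn]
      simp only [Equiv.symm_symm]
      show l.get (Fin.cast hlen.symm ⟨i, _⟩) = l[i]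
      congr 1
  · intro π _
    rw [indexOf_ofFn, indexOf_ofFn, PLprob_eq]
    congr 1
end

section
/- In the Plackett-Luce model with weights w ∈ ℝⁿ, for any two disjoint pairs of distinct elements (u,v) and (u',v') with {u,v} ∩ {u',v'} = ∅, the events {u ranked before v} and {u' ranked before v'} are statistically independent: P(u ≺ v ∧ u' ≺ v') = P(u ≺ v)·P(u' ≺ v'). -/
open Finset

namespace PLaux

lemma sum_inv {α : Type*} [Fintype α] [DecidableEq α] (f : Equiv.Perm α → ℝ) :
    ∑ π : Equiv.Perm α, f π = ∑ π : Equiv.Perm α, f π⁻¹ :=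
  (Equiv.sum_comp (Equiv.inv (Equiv.Perm α)) f).symm

variable {n : ℕ}

lemma sigma_symm_p (p : Fin (n+1)) (e : Equiv.Perm (Fin n)) :
    (Equiv.Perm.decomposeFin.symm (p, e)).symm p = 0 := by
  rw [Equiv.symm_apply_eq]
  exact (Equiv.Perm.decomposeFin_symm_apply_zero p e).symm

lemma sigma_symm_succ (p : Fin (n+1)) (e : Equiv.Perm (Fin n)) (i : Fin n) :
    (Equiv.Perm.decomposeFin.symm (p, e)).symm (Equiv.swap 0 p i.succ) = (e.symm i).succ := by
  rw [Equiv.symm_apply_eq, Equiv.Perm.decomposeFin_symm_apply_succ, Equiv.apply_symm_apply]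

lemma denom_eq (w : Fin (n+1) → ℝ) (p : Fin (n+1)) (e : Equiv.Perm (Fin n)) (i : Fin n) :
    ∑ j ∈ univ.filter (fun j => i.succ ≤ (Equiv.Perm.decomposeFin.symm (p, e)).symm j),
        Real.exp (w j)
      = ∑ m ∈ univ.filter (fun m => i ≤ e.symm m),
          Real.exp (w (Equiv.swap 0 p m.succ)) := by
  rw [sum_filter, sum_filter,
    ← Equiv.sum_comp (Equiv.swap 0 p)
      (fun j => if i.succ ≤ (Equiv.Perm.decomposeFin.symm (p, e)).symm j then Real.exp (w j) else 0),
    Fin.sum_univ_succ]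
  have h0 : (Equiv.swap 0 p) (0 : Fin (n+1)) = p := Equiv.swap_apply_left 0 p
  rw [h0]
  simp only [sigma_symm_p, sigma_symm_succ]
  have : ¬ (i.succ ≤ (0 : Fin (n+1))) := by
    simp [Fin.le_def, Fin.succ]
  rw [if_neg this, zero_add]
  simp only [Fin.succ_le_succ_iff]

lemma PL_step (w : Fin (n+1) → ℝ) (p : Fin (n+1)) (e : Equiv.Perm (Fin n)) :
    PLprob w (Equiv.Perm.decomposeFin.symm (p, e) : Equiv.Perm (Fin (n+1)))⁻¹
      = Real.exp (w p) / (∑ j, Real.exp (w j))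
        * PLprob (fun i => w (Equiv.swap 0 p i.succ)) e⁻¹ := by
  set σ := (Equiv.Perm.decomposeFin.symm (p, e) : Equiv.Perm (Fin (n+1))) with hσ
  have hinv : ∀ x, σ⁻¹ x = σ.symm x := fun x => by rw [Equiv.Perm.inv_def]
  have hinvs : ∀ x, σ⁻¹.symm x = σ x := fun x => by rw [Equiv.Perm.inv_def]; rfl
  unfold PLprob
  rw [Fin.prod_univ_succ]
  congr 1
  · have h1 : σ⁻¹.symm 0 = p := by rw [hinvs]; exact Equiv.Perm.decomposeFin_symm_apply_zero p e
    have h2 : univ.filter (fun j => (0 : Fin (n+1)) ≤ σ⁻¹ j) = univ := by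
      apply filter_true_of_mem; intro j _; exact Fin.zero_le _
    rw [h1, h2]
  · refine Finset.prod_congr rfl fun i _ => ?_
    have hnum : σ⁻¹.symm i.succ = Equiv.swap 0 p (e i).succ := by
      rw [hinvs]; exact Equiv.Perm.decomposeFin_symm_apply_succ e p i
    have hden : univ.filter (fun j => i.succ ≤ σ⁻¹ j) = univ.filter (fun j => i.succ ≤ σ.symm j) := by
      apply filter_congr; intro j _; rw [hinv]
    rw [hnum, hden, denom_eq w p e i]
    have h3 : (e⁻¹).symm i = e i := by rw [Equiv.Perm.inv_def]; rfl
    have h4 : univ.filter (fun m => i ≤ e⁻¹ m) = univ.filter (fun m => i ≤ e.symm m) := by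
      apply filter_congr; intro m _; rw [Equiv.Perm.inv_def]
    rw [h3, h4]

lemma sum_decomp (w : Fin (n+1) → ℝ) (P : Equiv.Perm (Fin (n+1)) → Prop) [DecidablePred P] :
    ∑ π ∈ univ.filter P, PLprob w π
      = ∑ p : Fin (n+1), Real.exp (w p) / (∑ j, Real.exp (w j)) *
          ∑ e ∈ univ.filter (fun e : Equiv.Perm (Fin n) =>
              P (Equiv.Perm.decomposeFin.symm (p, e) : Equiv.Perm (Fin (n+1)))⁻¹),
            PLprob (fun i => w (Equiv.swap 0 p i.succ)) e⁻¹ := by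
  rw [sum_filter, sum_inv (fun π => if P π then PLprob w π else 0),
    ← Equiv.sum_comp (Equiv.Perm.decomposeFin.symm : _ ≃ Equiv.Perm (Fin (n+1)))
      (fun σ => if P σ⁻¹ then PLprob w σ⁻¹ else 0),
    Fintype.sum_prod_type]
  refine Finset.sum_congr rfl fun p _ => ?_
  rw [mul_sum, sum_filter]
  refine Finset.sum_congr rfl fun e _ => ?_
  rw [PL_step w p e]

lemma S_pos (w : Fin (n+1) → ℝ) : 0 < ∑ j, Real.exp (w j) :=
  Finset.sum_pos (fun j _ => Real.exp_pos _) univ_nonempty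

lemma total : ∀ (n : ℕ) (w : Fin n → ℝ), ∑ π : Equiv.Perm (Fin n), PLprob w π = 1 := by
  intro n
  induction n with
  | zero => intro w; simp [PLprob]
  | succ n ih =>
    intro w
    have hd := sum_decomp w (fun _ => True)
    simp only [filter_true] at hd
    rw [hd]
    have h1 : ∀ p : Fin (n+1),
        ∑ e : Equiv.Perm (Fin n), PLprob (fun i => w (Equiv.swap 0 p i.succ)) e⁻¹ = 1 := by
      intro p
      rw [← sum_inv]
      exact ih _
    calc ∑ p : Fin (n+1), Real.exp (w p) / (∑ j, Real.exp (w j)) *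
          ∑ e : Equiv.Perm (Fin n), PLprob (fun i => w (Equiv.swap 0 p i.succ)) e⁻¹
        = ∑ p : Fin (n+1), Real.exp (w p) / (∑ j, Real.exp (w j)) := by
          refine Finset.sum_congr rfl fun p _ => ?_; rw [h1 p, mul_one]
      _ = 1 := by
          rw [← Finset.sum_div]
          exact div_self (ne_of_gt (S_pos w))
lemma red (p x : Fin (n+1)) (hx : x ≠ p) : ∃ a : Fin n, x = Equiv.swap 0 p a.succ := by
  have h : Equiv.swap 0 p x ≠ 0 := by
    intro h0
    apply hx
    have := congrArg (Equiv.swap 0 p) h0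
    rwa [Equiv.swap_apply_self, Equiv.swap_apply_left] at this
  exact ⟨(Equiv.swap 0 p x).pred h, by rw [Fin.succ_pred, Equiv.swap_apply_self]⟩
-- inverse of a perm applied = symm
lemma pinv {α : Type*} (σ : Equiv.Perm α) (x : α) : σ⁻¹ x = σ.symm x := rfl

-- the filtered inverse-sum trick
lemma inner_reindex (w' : Fin n → ℝ) (a b : Fin n) :
    ∑ e ∈ univ.filter (fun e : Equiv.Perm (Fin n) => e⁻¹ a < e⁻¹ b), PLprob w' e⁻¹
      = ∑ e ∈ univ.filter (fun e : Equiv.Perm (Fin n) => e a < e b), PLprob w' e := by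
  rw [sum_filter, sum_filter, sum_inv (fun e => if e a < e b then PLprob w' e else 0)]

lemma lemA : ∀ (n : ℕ) (w : Fin n → ℝ) (u v : Fin n), u ≠ v →
    ∑ π ∈ univ.filter (fun π : Equiv.Perm (Fin n) => π u < π v), PLprob w π
      = Real.exp (w u) / (Real.exp (w u) + Real.exp (w v)) := by
  intro n
  induction n with
  | zero => exact fun w u => u.elim0
  | succ n ih =>
    intro w u v huv
    rw [sum_decomp]
    have key : ∀ p : Fin (n+1),
        Real.exp (w p) / (∑ j, Real.exp (w j)) *
          ∑ e ∈ univ.filter (fun e : Equiv.Perm (Fin n) =>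
              (Equiv.Perm.decomposeFin.symm (p, e) : Equiv.Perm (Fin (n+1)))⁻¹ u
                < (Equiv.Perm.decomposeFin.symm (p, e) : Equiv.Perm (Fin (n+1)))⁻¹ v),
            PLprob (fun i => w (Equiv.swap 0 p i.succ)) e⁻¹
        = if p = u then Real.exp (w u) / (∑ j, Real.exp (w j))
          else if p = v then 0
          else Real.exp (w p) / (∑ j, Real.exp (w j)) *
            (Real.exp (w u) / (Real.exp (w u) + Real.exp (w v))) := by
      intro p
      by_cases hpu : p = u
      · subst hpu
        rw [if_pos rfl]
        have hfil : univ.filter (fun e : Equiv.Perm (Fin n) =>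
              (Equiv.Perm.decomposeFin.symm (p, e) : Equiv.Perm (Fin (n+1)))⁻¹ p
                < (Equiv.Perm.decomposeFin.symm (p, e) : Equiv.Perm (Fin (n+1)))⁻¹ v) = univ := by
          refine filter_true_of_mem fun e _ => ?_
          rw [pinv, pinv, sigma_symm_p]
          rw [Fin.pos_iff_ne_zero]
          intro h0
          exact huv.symm (by
            have := congrArg (Equiv.Perm.decomposeFin.symm (p, e) : Equiv.Perm (Fin (n+1))) h0
            rwa [Equiv.apply_symm_apply, Equiv.Perm.decomposeFin_symm_apply_zero] at this)
        rw [hfil, ← sum_inv, total, mul_one]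
      · rw [if_neg hpu]
        by_cases hpv : p = v
        · subst hpv
          rw [if_pos rfl]
          have hfil : univ.filter (fun e : Equiv.Perm (Fin n) =>
                (Equiv.Perm.decomposeFin.symm (p, e) : Equiv.Perm (Fin (n+1)))⁻¹ u
                  < (Equiv.Perm.decomposeFin.symm (p, e) : Equiv.Perm (Fin (n+1)))⁻¹ p) = ∅ := by
            refine filter_false_of_mem fun e _ => ?_
            rw [pinv, pinv, sigma_symm_p]
            exact Fin.not_lt_zero _
          rw [hfil, sum_empty, mul_zero]
        · rw [if_neg hpv]
          obtain ⟨a, ha⟩ := red p u (Ne.symm hpu)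
          obtain ⟨b, hb⟩ := red p v (Ne.symm hpv)
          have hab : a ≠ b := by
            intro h; apply huv; rw [ha, hb, h]
          have hfil : univ.filter (fun e : Equiv.Perm (Fin n) =>
                (Equiv.Perm.decomposeFin.symm (p, e) : Equiv.Perm (Fin (n+1)))⁻¹ u
                  < (Equiv.Perm.decomposeFin.symm (p, e) : Equiv.Perm (Fin (n+1)))⁻¹ v)
              = univ.filter (fun e : Equiv.Perm (Fin n) => e⁻¹ a < e⁻¹ b) := by
            refine filter_congr fun e _ => ?_
            rw [pinv, pinv, pinv, pinv, ha, hb, sigma_symm_succ, sigma_symm_succ,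
              Fin.succ_lt_succ_iff]
          rw [hfil, inner_reindex, ih _ a b hab]
          have hwa : w (Equiv.swap 0 p a.succ) = w u := by rw [← ha]
          have hwb : w (Equiv.swap 0 p b.succ) = w v := by rw [← hb]
          rw [hwa, hwb]
    rw [Finset.sum_congr rfl fun p _ => key p]
    -- now pure algebra
    set S := ∑ j, Real.exp (w j) with hS
    set eu := Real.exp (w u) with heu
    set ev := Real.exp (w v) with hev
    set r := eu / (eu + ev) with hr
    have hsub : ({u, v} : Finset (Fin (n+1))) ⊆ univ := subset_univ _
    have hsplit := Finset.sum_sdiff (f := fun p =>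
      if p = u then eu / S else if p = v then 0 else Real.exp (w p) / S * r) hsub
    rw [Finset.sum_pair huv] at hsplit
    rw [← hsplit]
    rw [if_pos rfl, if_neg huv.symm, if_pos rfl]
    have hdiff : ∑ p ∈ univ \ {u, v},
        (if p = u then eu / S else if p = v then 0 else Real.exp (w p) / S * r)
        = (∑ p ∈ univ \ {u, v}, Real.exp (w p)) / S * r := by
      rw [Finset.sum_div, Finset.sum_mul]
      refine Finset.sum_congr rfl fun p hp => ?_
      simp only [mem_sdiff, mem_insert, mem_singleton] at hp
      rw [if_neg (fun h => hp.2 (Or.inl h)), if_neg (fun h => hp.2 (Or.inr h))]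
    rw [hdiff]
    have hsum : ∑ p ∈ univ \ {u, v}, Real.exp (w p) = S - (eu + ev) := by
      have h2 := Finset.sum_sdiff (f := fun p => Real.exp (w p)) hsub
      rw [Finset.sum_pair huv] at h2
      beta_reduce at h2
      rw [heu, hev, hS]
      linarith [h2]
    rw [hsum, hr]
    have hS0 : S ≠ 0 := ne_of_gt (S_pos w)
    have he0 : eu + ev ≠ 0 := by positivity
    field_simp
    ring

lemma alg (S eu ev eu' ev' : ℝ) (hS : S ≠ 0) (h1 : eu + ev ≠ 0) (h2 : eu' + ev' ≠ 0) :
    (S - (eu + ev + eu' + ev')) / S * (eu / (eu + ev) * (eu' / (eu' + ev'))) +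
      (eu / S * (eu' / (eu' + ev')) + (0 + (eu' / S * (eu / (eu + ev)) + 0))) =
    eu / (eu + ev) * (eu' / (eu' + ev')) := by
  field_simp
  ring

lemma pos_of_ne {p x : Fin (n+1)} (e : Equiv.Perm (Fin n)) (hx : x ≠ p) :
    (0 : Fin (n+1)) < (Equiv.Perm.decomposeFin.symm (p, e) : Equiv.Perm (Fin (n+1)))⁻¹ x := by
  rw [pinv, Fin.pos_iff_ne_zero]
  intro h0
  apply hx
  have := congrArg (Equiv.Perm.decomposeFin.symm (p, e) : Equiv.Perm (Fin (n+1))) h0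
  rwa [Equiv.apply_symm_apply, Equiv.Perm.decomposeFin_symm_apply_zero] at this

lemma inner_reindexA (w' : Fin n → ℝ) (a b : Fin n) (hab : a ≠ b) :
    ∑ e ∈ univ.filter (fun e : Equiv.Perm (Fin n) => e⁻¹ a < e⁻¹ b), PLprob w' e⁻¹
      = Real.exp (w' a) / (Real.exp (w' a) + Real.exp (w' b)) := by
  rw [inner_reindex]
  exact lemA n w' a b hab

lemma lemB : ∀ (n : ℕ) (w : Fin n → ℝ) (u v u' v' : Fin n), u ≠ v → u' ≠ v' →
    u ≠ u' → u ≠ v' → v ≠ u' → v ≠ v' →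
    ∑ π ∈ univ.filter (fun π : Equiv.Perm (Fin n) => π u < π v ∧ π u' < π v'), PLprob w π
      = Real.exp (w u) / (Real.exp (w u) + Real.exp (w v)) *
        (Real.exp (w u') / (Real.exp (w u') + Real.exp (w v'))) := by
  intro n
  induction n with
  | zero => exact fun w u => u.elim0
  | succ n ih =>
    intro w u v u' v' huv hu'v' huu' huv' hvu' hvv'
    rw [sum_decomp]
    set S := ∑ j, Real.exp (w j) with hS
    set r := Real.exp (w u) / (Real.exp (w u) + Real.exp (w v)) with hr
    set r' := Real.exp (w u') / (Real.exp (w u') + Real.exp (w v')) with hr'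
    have key : ∀ p : Fin (n+1),
        Real.exp (w p) / S *
          ∑ e ∈ univ.filter (fun e : Equiv.Perm (Fin n) =>
              (Equiv.Perm.decomposeFin.symm (p, e) : Equiv.Perm (Fin (n+1)))⁻¹ u
                < (Equiv.Perm.decomposeFin.symm (p, e) : Equiv.Perm (Fin (n+1)))⁻¹ v
              ∧ (Equiv.Perm.decomposeFin.symm (p, e) : Equiv.Perm (Fin (n+1)))⁻¹ u'
                < (Equiv.Perm.decomposeFin.symm (p, e) : Equiv.Perm (Fin (n+1)))⁻¹ v'),
            PLprob (fun i => w (Equiv.swap 0 p i.succ)) e⁻¹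
        = if p = u then Real.exp (w u) / S * r'
          else if p = v then 0
          else if p = u' then Real.exp (w u') / S * r
          else if p = v' then 0
          else Real.exp (w p) / S * (r * r') := by
      intro p
      by_cases hpu : p = u
      · subst hpu
        rw [if_pos rfl]
        obtain ⟨a', ha'⟩ := red p u' (Ne.symm huu')
        obtain ⟨b', hb'⟩ := red p v' (Ne.symm huv')
        have hab' : a' ≠ b' := fun h => hu'v' (by rw [ha', hb', h])
        have hfil : univ.filter (fun e : Equiv.Perm (Fin n) =>
              (Equiv.Perm.decomposeFin.symm (p, e) : Equiv.Perm (Fin (n+1)))⁻¹ p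
                < (Equiv.Perm.decomposeFin.symm (p, e) : Equiv.Perm (Fin (n+1)))⁻¹ v
              ∧ (Equiv.Perm.decomposeFin.symm (p, e) : Equiv.Perm (Fin (n+1)))⁻¹ u'
                < (Equiv.Perm.decomposeFin.symm (p, e) : Equiv.Perm (Fin (n+1)))⁻¹ v')
            = univ.filter (fun e : Equiv.Perm (Fin n) => e⁻¹ a' < e⁻¹ b') := by
          refine filter_congr fun e _ => ?_
          constructor
          · rintro ⟨-, h2⟩
            rwa [pinv, pinv, ha', hb', sigma_symm_succ, sigma_symm_succ,
              Fin.succ_lt_succ_iff, ← pinv, ← pinv] at h2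
          · intro h
            refine ⟨?_, ?_⟩
            · rw [pinv, sigma_symm_p]
              exact pos_of_ne e (Ne.symm huv)
            · rwa [pinv, pinv, ha', hb', sigma_symm_succ, sigma_symm_succ,
                Fin.succ_lt_succ_iff, ← pinv, ← pinv]
        rw [hfil, inner_reindexA _ a' b' hab']
        have hwa : w (Equiv.swap 0 p a'.succ) = w u' := by rw [← ha']
        have hwb : w (Equiv.swap 0 p b'.succ) = w v' := by rw [← hb']
        simp only [hwa, hwb, hr']
      · rw [if_neg hpu]
        by_cases hpv : p = v
        · subst hpv
          rw [if_pos rfl]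
          have hfil : univ.filter (fun e : Equiv.Perm (Fin n) =>
                (Equiv.Perm.decomposeFin.symm (p, e) : Equiv.Perm (Fin (n+1)))⁻¹ u
                  < (Equiv.Perm.decomposeFin.symm (p, e) : Equiv.Perm (Fin (n+1)))⁻¹ p
                ∧ (Equiv.Perm.decomposeFin.symm (p, e) : Equiv.Perm (Fin (n+1)))⁻¹ u'
                  < (Equiv.Perm.decomposeFin.symm (p, e) : Equiv.Perm (Fin (n+1)))⁻¹ v')
              = ∅ := by
            refine filter_false_of_mem fun e _ => ?_
            rintro ⟨h1, -⟩
            rw [pinv _ u, pinv _ p, sigma_symm_p] at h1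
            exact Fin.not_lt_zero _ h1
          rw [hfil, sum_empty, mul_zero]
        · rw [if_neg hpv]
          by_cases hpu' : p = u'
          · subst hpu'
            rw [if_pos rfl]
            obtain ⟨a, ha⟩ := red p u (Ne.symm hpu)
            obtain ⟨b, hb⟩ := red p v (Ne.symm hpv)
            have hab : a ≠ b := fun h => huv (by rw [ha, hb, h])
            have hfil : univ.filter (fun e : Equiv.Perm (Fin n) =>
                  (Equiv.Perm.decomposeFin.symm (p, e) : Equiv.Perm (Fin (n+1)))⁻¹ u
                    < (Equiv.Perm.decomposeFin.symm (p, e) : Equiv.Perm (Fin (n+1)))⁻¹ v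
                  ∧ (Equiv.Perm.decomposeFin.symm (p, e) : Equiv.Perm (Fin (n+1)))⁻¹ p
                    < (Equiv.Perm.decomposeFin.symm (p, e) : Equiv.Perm (Fin (n+1)))⁻¹ v')
                = univ.filter (fun e : Equiv.Perm (Fin n) => e⁻¹ a < e⁻¹ b) := by
              refine filter_congr fun e _ => ?_
              constructor
              · rintro ⟨h1, -⟩
                rwa [pinv, pinv, ha, hb, sigma_symm_succ, sigma_symm_succ,
                  Fin.succ_lt_succ_iff, ← pinv, ← pinv] at h1
              · intro h
                refine ⟨?_, ?_⟩
                · rwa [pinv, pinv, ha, hb, sigma_symm_succ, sigma_symm_succ,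
                    Fin.succ_lt_succ_iff, ← pinv, ← pinv]
                · rw [pinv, sigma_symm_p]
                  exact pos_of_ne e (Ne.symm hu'v')
            rw [hfil, inner_reindexA _ a b hab]
            have hwa : w (Equiv.swap 0 p a.succ) = w u := by rw [← ha]
            have hwb : w (Equiv.swap 0 p b.succ) = w v := by rw [← hb]
            simp only [hwa, hwb, hr]
          · rw [if_neg hpu']
            by_cases hpv' : p = v'
            · subst hpv'
              rw [if_pos rfl]
              have hfil : univ.filter (fun e : Equiv.Perm (Fin n) =>
                    (Equiv.Perm.decomposeFin.symm (p, e) : Equiv.Perm (Fin (n+1)))⁻¹ u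
                      < (Equiv.Perm.decomposeFin.symm (p, e) : Equiv.Perm (Fin (n+1)))⁻¹ v
                    ∧ (Equiv.Perm.decomposeFin.symm (p, e) : Equiv.Perm (Fin (n+1)))⁻¹ u'
                      < (Equiv.Perm.decomposeFin.symm (p, e) : Equiv.Perm (Fin (n+1)))⁻¹ p)
                  = ∅ := by
                refine filter_false_of_mem fun e _ => ?_
                rintro ⟨-, h2⟩
                rw [pinv _ u', pinv _ p, sigma_symm_p] at h2
                exact Fin.not_lt_zero _ h2
              rw [hfil, sum_empty, mul_zero]
            · rw [if_neg hpv']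
              obtain ⟨a, ha⟩ := red p u (Ne.symm hpu)
              obtain ⟨b, hb⟩ := red p v (Ne.symm hpv)
              obtain ⟨a', ha'⟩ := red p u' (Ne.symm hpu')
              obtain ⟨b', hb'⟩ := red p v' (Ne.symm hpv')
              have hab : a ≠ b := fun h => huv (by rw [ha, hb, h])
              have hab' : a' ≠ b' := fun h => hu'v' (by rw [ha', hb', h])
              have haa' : a ≠ a' := fun h => huu' (by rw [ha, ha', h])
              have hab2 : a ≠ b' := fun h => huv' (by rw [ha, hb', h])
              have hba' : b ≠ a' := fun h => hvu' (by rw [hb, ha', h])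
              have hbb' : b ≠ b' := fun h => hvv' (by rw [hb, hb', h])
              have hfil : univ.filter (fun e : Equiv.Perm (Fin n) =>
                    (Equiv.Perm.decomposeFin.symm (p, e) : Equiv.Perm (Fin (n+1)))⁻¹ u
                      < (Equiv.Perm.decomposeFin.symm (p, e) : Equiv.Perm (Fin (n+1)))⁻¹ v
                    ∧ (Equiv.Perm.decomposeFin.symm (p, e) : Equiv.Perm (Fin (n+1)))⁻¹ u'
                      < (Equiv.Perm.decomposeFin.symm (p, e) : Equiv.Perm (Fin (n+1)))⁻¹ v')
                  = univ.filter (fun e : Equiv.Perm (Fin n) => e⁻¹ a < e⁻¹ b ∧ e⁻¹ a' < e⁻¹ b') := by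
                refine filter_congr fun e _ => ?_
                rw [pinv, pinv, pinv, pinv, ha, hb, ha', hb', sigma_symm_succ, sigma_symm_succ,
                  sigma_symm_succ, sigma_symm_succ, Fin.succ_lt_succ_iff, Fin.succ_lt_succ_iff]
                rfl
              rw [hfil]
              have hre : ∑ e ∈ univ.filter (fun e : Equiv.Perm (Fin n) =>
                    e⁻¹ a < e⁻¹ b ∧ e⁻¹ a' < e⁻¹ b'),
                  PLprob (fun i => w (Equiv.swap 0 p i.succ)) e⁻¹
                  = ∑ e ∈ univ.filter (fun e : Equiv.Perm (Fin n) =>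
                      e a < e b ∧ e a' < e b'),
                    PLprob (fun i => w (Equiv.swap 0 p i.succ)) e := by
                rw [sum_filter, sum_filter,
                  sum_inv (fun e => if e a < e b ∧ e a' < e b'
                    then PLprob (fun i => w (Equiv.swap 0 p i.succ)) e else 0)]
              rw [hre, ih _ a b a' b' hab hab' haa' hab2 hba' hbb']
              have hwa : w (Equiv.swap 0 p a.succ) = w u := by rw [← ha]
              have hwb : w (Equiv.swap 0 p b.succ) = w v := by rw [← hb]
              have hwa' : w (Equiv.swap 0 p a'.succ) = w u' := by rw [← ha']
              have hwb' : w (Equiv.swap 0 p b'.succ) = w v' := by rw [← hb']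
              simp only [hwa, hwb, hwa', hwb', hr, hr']
    rw [Finset.sum_congr rfl fun p _ => key p]
    -- algebra
    set eu := Real.exp (w u) with heu
    set ev := Real.exp (w v) with hev
    set eu' := Real.exp (w u') with heu'
    set ev' := Real.exp (w v') with hev'
    have hnm : u ∉ ({v, u', v'} : Finset (Fin (n+1))) := by simp [huv, huu', huv']
    have hnm2 : v ∉ ({u', v'} : Finset (Fin (n+1))) := by simp [hvu', hvv']
    have hnm3 : u' ∉ ({v'} : Finset (Fin (n+1))) := by simp [hu'v']
    have hsub : ({u, v, u', v'} : Finset (Fin (n+1))) ⊆ univ := subset_univ _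
    have hsplit := Finset.sum_sdiff (f := fun p =>
      if p = u then eu / S * r' else if p = v then 0 else if p = u' then eu' / S * r
      else if p = v' then 0 else Real.exp (w p) / S * (r * r')) hsub
    rw [Finset.sum_insert hnm, Finset.sum_insert hnm2, Finset.sum_insert hnm3,
      Finset.sum_singleton] at hsplit
    rw [← hsplit]
    rw [if_pos rfl, if_neg huv.symm, if_pos rfl, if_neg huu'.symm, if_neg hvu'.symm, if_pos rfl,
      if_neg huv'.symm, if_neg hvv'.symm, if_neg hu'v'.symm, if_pos rfl]
    have hdiff : ∑ p ∈ univ \ {u, v, u', v'},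
        (if p = u then eu / S * r' else if p = v then 0 else if p = u' then eu' / S * r
          else if p = v' then 0 else Real.exp (w p) / S * (r * r'))
        = (∑ p ∈ univ \ {u, v, u', v'}, Real.exp (w p)) / S * (r * r') := by
      rw [Finset.sum_div, Finset.sum_mul]
      refine Finset.sum_congr rfl fun p hp => ?_
      simp only [mem_sdiff, mem_insert, mem_singleton] at hp
      have h1 := hp.2
      push_neg at h1
      rw [if_neg h1.1, if_neg h1.2.1, if_neg h1.2.2.1, if_neg h1.2.2.2]
    rw [hdiff]
    have hsum : ∑ p ∈ univ \ {u, v, u', v'}, Real.exp (w p) = S - (eu + ev + eu' + ev') := by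
      have h2 := Finset.sum_sdiff (f := fun p => Real.exp (w p)) hsub
      rw [Finset.sum_insert hnm, Finset.sum_insert hnm2, Finset.sum_insert hnm3,
        Finset.sum_singleton] at h2
      beta_reduce at h2
      rw [heu, hev, heu', hev', hS]
      linarith [h2]
    rw [hsum, hr, hr']
    have hS0 : S ≠ 0 := ne_of_gt (S_pos w)
    have he0 : eu + ev ≠ 0 := by positivity
    have he0' : eu' + ev' ≠ 0 := by positivity
    exact alg S eu ev eu' ev' hS0 he0 he0'

end PLaux

/-- for disjoint pairs (u,v), (u',v'), the events {u ≺ v} and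
{u' ≺ v'} are independent under Plackett-Luce. -/
theorem stmt_11 (n : ℕ) (w : Fin n → ℝ) (u v u' v' : Fin n)
    (huv : u ≠ v) (hu'v' : u' ≠ v')
    (hdisj : ({u, v} : Set (Fin n)) ∩ {u', v'} = ∅) :
    ∑ π ∈ univ.filter (fun π : Equiv.Perm (Fin n) => π u < π v ∧ π u' < π v'),
        PLprob w π
      = (∑ π ∈ univ.filter (fun π : Equiv.Perm (Fin n) => π u < π v), PLprob w π)
        * (∑ π ∈ univ.filter (fun π : Equiv.Perm (Fin n) => π u' < π v'), PLprob w π) := by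
  have hmem := Set.eq_empty_iff_forall_notMem.mp hdisj
  have huu' : u ≠ u' := fun h => hmem u (by simp [h])
  have huv2 : u ≠ v' := fun h => hmem u (by simp [h])
  have hvu' : v ≠ u' := fun h => hmem v (by simp [h])
  have hvv' : v ≠ v' := fun h => hmem v (by simp [h])
  rw [PLaux.lemB n w u v u' v' huv hu'v' huu' huv2 hvu' hvv',
    PLaux.lemA n w u v huv, PLaux.lemA n w u' v' hu'v']
end
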